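/- Lower bound on share Rényi entropy in ε-secure secret sharing: for any fixed α ∈ (1,∞), if S is a deterministic function of (V_i, V_F) and R_α(S|V_F) ≥ R_α(S) − ε for some F not containing i, then R_α(V_i) ≥ R_α(S) − ε. -/

import Mathlib

open Finset Real Filter

/-- `P` is a probability mass function on the finite set `α`. -/
def IsPMF {α : Type*} [Fintype α] (P : α → ℝ) : Prop :=
  (∀ x, 0 ≤ P x) ∧ ∑ x, P x = 1

/-- Min-entropy `R_∞(X) = - log max_x P(x)`. -/
noncomputable def minEnt {α : Type*} [Fintype α] [Nonempty α] (P : α → ℝ) : ℝ :=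
  - Real.log (⨆ x, P x)

/-- Rényi entropy of order `a`: `R_a(X) = (1/(1-a)) log Σ_x P(x)^a`. -/
noncomputable def renyiEnt {α : Type*} [Fintype α] (a : ℝ) (P : α → ℝ) : ℝ :=
  (1 / (1 - a)) * Real.log (∑ x, P x ^ a)

/-- Marginal on the first component of a joint distribution. -/
noncomputable def margX {α β : Type*} [Fintype α] [Fintype β] (P : α × β → ℝ) : α → ℝ :=
  fun x => ∑ y, P (x, y)

/-- Marginal on the second component of a joint distribution. -/
noncomputable def margY {α β : Type*} [Fintype α] [Fintype β] (P : α × β → ℝ) : β → ℝ :=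
  fun y => ∑ x, P (x, y)

/-- Average conditional min-entropy
`R_∞(X|Y) = - log Σ_y P_Y(y) max_x P_{X|Y}(x|y)`. -/
noncomputable def condMinEnt {α β : Type*} [Fintype α] [Fintype β] [Nonempty α]
    (P : α × β → ℝ) : ℝ :=
  - Real.log (∑ y, margY P y * ⨆ x, P (x, y) / margY P y)

/-- Arimoto's conditional Rényi entropy of order `a`:
`R_a(X|Y) = (a/(1-a)) log Σ_y P_Y(y) (Σ_x P_{X|Y}(x|y)^a)^(1/a)`. -/
noncomputable def condRenyiEnt {α β : Type*} [Fintype α] [Fintype β]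
    (a : ℝ) (P : α × β → ℝ) : ℝ :=
  (a / (1 - a)) *
    Real.log (∑ y, margY P y * (∑ x, (P (x, y) / margY P y) ^ a) ^ (1 / a))

/-- Shannon entropy `H(X) = - Σ_x P(x) log P(x)`. -/
noncomputable def shannonEnt {α : Type*} [Fintype α] (P : α → ℝ) : ℝ :=
  ∑ x, Real.negMulLog (P x)

/-- Conditional Shannon entropy `H(X|Y) = H(XY) - H(Y)`. -/
noncomputable def condShannonEnt {α β : Type*} [Fintype α] [Fintype β]
    (P : α × β → ℝ) : ℝ :=
  shannonEnt P - shannonEnt (margY P)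

/-- Distribution of the random variable `X : Ω → α` under the pmf `μ` on `Ω`. -/
noncomputable def dist {Ω α : Type*} [Fintype Ω] [DecidableEq α]
    (μ : Ω → ℝ) (X : Ω → α) : α → ℝ :=
  fun x => ∑ ω, if X ω = x then μ ω else 0

lemma sum_rpow_le_rpow_sum' {ι : Type*} (t : Finset ι) (r : ι → ℝ)
    (hr : ∀ v ∈ t, 0 ≤ r v) {p : ℝ} (hp : 1 ≤ p) :
    ∑ v ∈ t, r v ^ p ≤ (∑ v ∈ t, r v) ^ p := by
  have hp0 : 0 < p := lt_of_lt_of_le one_pos hp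
  set m := ∑ v ∈ t, r v with hm
  have hm0 : 0 ≤ m := Finset.sum_nonneg hr
  calc ∑ v ∈ t, r v ^ p ≤ ∑ v ∈ t, m ^ (p - 1) * r v := by
        apply Finset.sum_le_sum
        intro v hv
        rcases (hr v hv).eq_or_lt with h0 | h0
        · rw [← h0, Real.zero_rpow hp0.ne', mul_zero]
        · have hle : r v ≤ m := Finset.single_le_sum hr hv
          calc r v ^ p = r v ^ (p - 1) * r v := by
                rw [← Real.rpow_add_one h0.ne' (p - 1), sub_add_cancel]
            _ ≤ m ^ (p - 1) * r v :=
                mul_le_mul_of_nonneg_right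
                  (Real.rpow_le_rpow h0.le hle (by linarith)) h0.le
    _ = m ^ (p - 1) * m := by rw [← Finset.mul_sum]
    _ = m ^ p := by
        rcases hm0.eq_or_lt with h0 | h0
        · simp [← h0, Real.zero_rpow hp0.ne']
        · rw [← Real.rpow_add_one h0.ne' (p - 1), sub_add_cancel]

lemma lp_sum_le' {ι κ : Type*} [DecidableEq ι] [Fintype κ] (t : Finset ι) (g : ι → κ → ℝ)
    (hg : ∀ y v, 0 ≤ g y v) {p : ℝ} (hp : 1 ≤ p) :
    (∑ v, (∑ y ∈ t, g y v) ^ p) ^ (1 / p) ≤ ∑ y ∈ t, (∑ v, g y v ^ p) ^ (1 / p) := by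
  have hp0 : 0 < p := lt_of_lt_of_le one_pos hp
  induction t using Finset.induction with
  | empty =>
    simp [Real.zero_rpow hp0.ne', one_div, Real.zero_rpow (inv_ne_zero hp0.ne')]
  | @insert b s hb ih =>
    have e1 : ∑ v : κ, |g b v + ∑ y ∈ s, g y v| ^ p
        = ∑ v : κ, (g b v + ∑ y ∈ s, g y v) ^ p :=
      Finset.sum_congr rfl fun v _ => by
        rw [abs_of_nonneg (add_nonneg (hg b v) (Finset.sum_nonneg fun y _ => hg y v))]
    have e2 : ∑ v : κ, |g b v| ^ p = ∑ v : κ, g b v ^ p :=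
      Finset.sum_congr rfl fun v _ => by rw [abs_of_nonneg (hg b v)]
    have e3 : ∑ v : κ, |∑ y ∈ s, g y v| ^ p = ∑ v : κ, (∑ y ∈ s, g y v) ^ p :=
      Finset.sum_congr rfl fun v _ => by
        rw [abs_of_nonneg (Finset.sum_nonneg fun y _ => hg y v)]
    calc (∑ v, (∑ y ∈ insert b s, g y v) ^ p) ^ (1 / p)
        = (∑ v, (g b v + ∑ y ∈ s, g y v) ^ p) ^ (1 / p) := by
          simp_rw [Finset.sum_insert hb]
      _ ≤ (∑ v, g b v ^ p) ^ (1 / p) + (∑ v, (∑ y ∈ s, g y v) ^ p) ^ (1 / p) := by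
          rw [← e1, ← e2, ← e3]
          exact Real.Lp_add_le Finset.univ _ _ hp
      _ ≤ (∑ v, g b v ^ p) ^ (1 / p) + ∑ y ∈ s, (∑ v, g y v ^ p) ^ (1 / p) :=
          add_le_add le_rfl ih
      _ = ∑ y ∈ insert b s, (∑ v, g y v ^ p) ^ (1 / p) := by rw [Finset.sum_insert hb]

lemma dist_apply {Ω α : Type*} [Fintype Ω] [DecidableEq α]
    (μ : Ω → ℝ) (X : Ω → α) (x : α) :
    _root_.dist μ X x = ∑ ω, if X ω = x then μ ω else 0 := rfl

lemma dist_nonneg'' {Ω α : Type*} [Fintype Ω] [DecidableEq α]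
    {μ : Ω → ℝ} (hμ : ∀ ω, 0 ≤ μ ω) (X : Ω → α) (x : α) :
    0 ≤ _root_.dist μ X x :=
  Finset.sum_nonneg fun ω _ => by rw [apply_ite (0 ≤ ·)]; simp [hμ ω]

/-- Lower bound on share Rényi entropy in ε-secure secret
sharing: for any fixed `a ∈ (1,∞)`, if `S` is a deterministic function of
`(V_i, V_F)` and `R_a(S|V_F) ≥ R_a(S) - ε` with `i ∉ F`, then
`R_a(V_i) ≥ R_a(S) - ε`. -/
theorem share_renyiEnt_lower_bound {Ω 𝓢 𝓥 : Type*} [Fintype Ω] [Fintype 𝓢]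
    [Fintype 𝓥] [DecidableEq 𝓢] [DecidableEq 𝓥] {n : ℕ}
    (a : ℝ) (ha : 1 < a)
    (μ : Ω → ℝ) (hμ : IsPMF μ) (S : Ω → 𝓢) (V : Fin n → Ω → 𝓥)
    (i : Fin n) (F : Finset (Fin n)) (hiF : i ∉ F) (ε : ℝ)
    (hcorr : ∃ f : 𝓥 × (F → 𝓥) → 𝓢,
      ∀ ω, μ ω ≠ 0 → S ω = f (V i ω, fun j => V j.1 ω))
    (hsec : renyiEnt a (dist μ S) - ε ≤
      condRenyiEnt a (dist μ (fun ω => (S ω, fun j : F => V j.1 ω)))) :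
    renyiEnt a (dist μ S) - ε ≤ renyiEnt a (dist μ (V i)) := by
  obtain ⟨f, hf⟩ := hcorr
  have hμ0 : ∀ ω, 0 ≤ μ ω := hμ.1
  have ha0 : (0:ℝ) < a := lt_trans one_pos ha
  set fn : Ω → (F → 𝓥) := fun ω => fun j : F => V j.1 ω with hfn
  set P : 𝓢 × (F → 𝓥) → ℝ := dist μ (fun ω => (S ω, fn ω)) with hPdef
  set R : 𝓥 × (F → 𝓥) → ℝ := dist μ (fun ω => (V i ω, fn ω)) with hRdef
  set Q : 𝓥 → ℝ := dist μ (V i) with hQdef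
  have hP0 : ∀ z, 0 ≤ P z := fun z => by rw [hPdef]; exact dist_nonneg'' hμ0 _ z
  have hR0 : ∀ z, 0 ≤ R z := fun z => by rw [hRdef]; exact dist_nonneg'' hμ0 _ z
  have hQ0 : ∀ v, 0 ≤ Q v := fun v => by rw [hQdef]; exact dist_nonneg'' hμ0 _ v
  -- Q is the marginal of R
  have hQR : ∀ v, Q v = ∑ y, R (v, y) := by
    intro v
    rw [hQdef, hRdef]
    simp only [dist_apply]
    rw [Finset.sum_comm]
    refine Finset.sum_congr rfl fun ω _ => ?_
    simp [Prod.ext_iff, ite_and, Finset.sum_ite_eq]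
  -- P is the pushforward of R under f (on each fiber over y)
  have hPR : ∀ s y, P (s, y) = ∑ v, if f (v, y) = s then R (v, y) else 0 := by
    intro s y
    rw [hPdef, hRdef]
    simp only [dist_apply]
    have key : ∀ ω, (if (S ω, fn ω) = (s, y) then μ ω else 0)
        = ∑ v, if f (v, y) = s then (if (V i ω, fn ω) = (v, y) then μ ω else 0) else 0 := by
      intro ω
      rcases eq_or_ne (μ ω) 0 with h0 | h0
      · simp [h0]
      · have hS := hf ω h0
        rw [Finset.sum_eq_single (V i ω)]
        · by_cases hy : fn ω = y
          · subst hy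
            rw [hS]
            simp [Prod.ext_iff, hfn]
          · simp [Prod.ext_iff, hy]
        · intro v _ hv
          simp [Prod.ext_iff, (Ne.symm hv : V i ω ≠ v)]
        · intro h; exact absurd (Finset.mem_univ _) h
    calc (∑ ω, if (S ω, fn ω) = (s, y) then μ ω else 0)
        = ∑ ω, ∑ v, (if f (v, y) = s then (if (V i ω, fn ω) = (v, y) then μ ω else 0) else 0) :=
          Finset.sum_congr rfl fun ω _ => key ω
      _ = ∑ v, ∑ ω, (if f (v, y) = s then (if (V i ω, fn ω) = (v, y) then μ ω else 0) else 0) :=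
          Finset.sum_comm
      _ = ∑ v, (if f (v, y) = s then ∑ ω, (if (V i ω, fn ω) = (v, y) then μ ω else 0) else 0) :=
          Finset.sum_congr rfl fun v _ => by split <;> simp
  -- step A : pushforward increases the sum of a-th powers
  have hA : ∀ y, ∑ v, R (v, y) ^ a ≤ ∑ s, P (s, y) ^ a := by
    intro y
    have := Finset.sum_fiberwise (Finset.univ : Finset 𝓥) (fun v => f (v, y))
      (fun v => R (v, y) ^ a)
    rw [← this]
    apply Finset.sum_le_sum
    intro s _
    have h1 : ∑ v ∈ Finset.univ.filter (fun v => f (v, y) = s), R (v, y) ^ a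
        ≤ (∑ v ∈ Finset.univ.filter (fun v => f (v, y) = s), R (v, y)) ^ a :=
      sum_rpow_le_rpow_sum' _ _ (fun v _ => hR0 _) ha.le
    have h2 : ∑ v ∈ Finset.univ.filter (fun v => f (v, y) = s), R (v, y) = P (s, y) := by
      rw [hPR s y, Finset.sum_filter]
    rw [← h2]
    exact h1
  -- step B : Minkowski
  have hB : (∑ v, Q v ^ a) ^ (1 / a) ≤ ∑ y, (∑ s, P (s, y) ^ a) ^ (1 / a) := by
    calc (∑ v, Q v ^ a) ^ (1 / a)
        = (∑ v, (∑ y, R (v, y)) ^ a) ^ (1 / a) := by simp_rw [hQR]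
      _ ≤ ∑ y, (∑ v, R (v, y) ^ a) ^ (1 / a) :=
          lp_sum_le' Finset.univ (fun y v => R (v, y)) (fun y v => hR0 _) ha.le
      _ ≤ ∑ y, (∑ s, P (s, y) ^ a) ^ (1 / a) := by
          apply Finset.sum_le_sum
          intro y _
          exact Real.rpow_le_rpow (Finset.sum_nonneg fun v _ => Real.rpow_nonneg (hR0 _) a)
            (hA y) (by positivity)
  -- step C : simplify the conditional sum
  have hC : ∑ y, margY P y * (∑ s, (P (s, y) / margY P y) ^ a) ^ (1 / a)
      = ∑ y, (∑ s, P (s, y) ^ a) ^ (1 / a) := by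
    refine Finset.sum_congr rfl fun y _ => ?_
    have hm0 : 0 ≤ margY P y := Finset.sum_nonneg fun s _ => hP0 _
    rcases hm0.eq_or_lt with hm | hm
    · have hz : ∀ s, P (s, y) = 0 := by
        intro s
        have := (Finset.sum_eq_zero_iff_of_nonneg (fun s _ => hP0 (s, y))).mp hm.symm
        exact this s (Finset.mem_univ s)
      simp [← hm, hz, Real.zero_rpow ha0.ne', one_div,
        Real.zero_rpow (inv_ne_zero ha0.ne')]
    · have h1 : ∀ s, (P (s, y) / margY P y) ^ a = P (s, y) ^ a / margY P y ^ a :=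
        fun s => Real.div_rpow (hP0 _) hm.le a
      simp_rw [h1, ← Finset.sum_div]
      rw [Real.div_rpow (Finset.sum_nonneg fun s _ => Real.rpow_nonneg (hP0 _) a)
        (Real.rpow_nonneg hm.le a)]
      rw [← Real.rpow_mul hm.le, mul_one_div, div_self ha0.ne', Real.rpow_one]
      rw [mul_comm, div_mul_cancel₀ _ hm.ne']
  -- step D : positivity of the Q-sum
  have hQsum : ∑ v, Q v = 1 := by
    rw [hQdef]
    simp only [dist_apply]
    rw [Finset.sum_comm]
    simp only [Finset.sum_ite_eq, Finset.mem_univ, if_true]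
    exact hμ.2
  have hU : 0 < ∑ v, Q v ^ a := by
    obtain ⟨v, hv⟩ : ∃ v, Q v ≠ 0 := by
      by_contra h
      push_neg at h
      rw [Finset.sum_eq_zero (fun v _ => h v)] at hQsum
      norm_num at hQsum
    have hv' : 0 < Q v := lt_of_le_of_ne (hQ0 v) (Ne.symm hv)
    exact lt_of_lt_of_le (Real.rpow_pos_of_pos hv' a)
      (Finset.single_le_sum (f := fun v => Q v ^ a)
        (fun w _ => Real.rpow_nonneg (hQ0 w) a) (Finset.mem_univ v))
  -- step E : conclude
  refine le_trans hsec ?_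
  rw [condRenyiEnt, renyiEnt]
  set U := ∑ v, Q v ^ a with hUdef
  set T := ∑ y, margY P y * (∑ s, (P (s, y) / margY P y) ^ a) ^ (1 / a) with hTdef
  have hUT : U ^ (1 / a) ≤ T := by rw [hC]; exact hB
  have hU1a : 0 < U ^ (1 / a) := Real.rpow_pos_of_pos hU _
  have hT0 : 0 < T := lt_of_lt_of_le hU1a hUT
  have hlog : (1 / a) * Real.log U ≤ Real.log T := by
    rw [← Real.log_rpow hU]
    exact Real.log_le_log hU1a hUT
  have h2 : Real.log U ≤ a * Real.log T := by
    have := mul_le_mul_of_nonneg_left hlog ha0.le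
    rwa [← mul_assoc, mul_one_div, div_self ha0.ne', one_mul] at this
  have hneg : 1 / (1 - a) < 0 := by
    apply div_neg_of_pos_of_neg one_pos; linarith
  calc a / (1 - a) * Real.log T = 1 / (1 - a) * (a * Real.log T) := by ring
    _ ≤ 1 / (1 - a) * Real.log U := by
        exact mul_le_mul_of_nonpos_left h2 hneg.le
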